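/- Let λ = (λ₁,...,λ_d) be a partition of n, κ ⊂ λ with |κ| = n−2, such that λ/κ consists of two boxes at positions (i₁,j₁) and (i₂,j₂) with distance L = |i₁−i₂| + |j₁−j₂| > 1 (so both are corners of λ). Let α¹, α² be the partitions obtained from λ by deleting the corners (i₁,j₁) and (i₂,j₂) respectively. Then n·(n−1)⁻¹·(#SYT(α¹)·#SYT(α²))/(#SYT(λ)·#SYT(κ)) = 1 − L⁻². -/

import Mathlib

noncomputable section

/-- The number of standard Young tableaux of shape `Y`. -/
def numSYT (Y : YoungDiagram) : ℕ :=
  Nat.card {T : Y.cells → Fin Y.card //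
    Function.Bijective T ∧
    ∀ c₁ c₂ : Y.cells, c₁.1.1 ≤ c₂.1.1 → c₁.1.2 ≤ c₂.1.2 → c₁ ≠ c₂ → T c₁ < T c₂}

namespace YD13
open YoungDiagram

abbrev SYTsub (Y : YoungDiagram) :=
  {T : Y.cells → Fin Y.card //
    Function.Bijective T ∧
    ∀ c₁ c₂ : Y.cells, c₁.1.1 ≤ c₂.1.1 → c₁.1.2 ≤ c₂.1.2 → c₁ ≠ c₂ → T c₁ < T c₂}

lemma numSYT_def (Y : YoungDiagram) : numSYT Y = Nat.card (SYTsub Y) := rfl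

variable {Y : YoungDiagram}

/-- the cell carrying the top entry -/
def cmax (h0 : Y.card ≠ 0) (T : SYTsub Y) : Y.cells :=
  (Equiv.ofBijective T.1 T.2.1).symm ⟨Y.card - 1, by omega⟩

lemma T_cmax (h0 : Y.card ≠ 0) (T : SYTsub Y) :
    T.1 (cmax h0 T) = ⟨Y.card - 1, by omega⟩ :=
  (Equiv.ofBijective T.1 T.2.1).apply_symm_apply _

lemma cmax_not_right (h0 : Y.card ≠ 0) (T : SYTsub Y) :
    ((cmax h0 T).1.1, (cmax h0 T).1.2 + 1) ∉ Y := by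
  intro hmem
  set c := cmax h0 T with hc
  set c' : Y.cells := ⟨(c.1.1, c.1.2 + 1), (mem_cells _).2 hmem⟩ with hc'
  have hne : c ≠ c' := by
    intro h
    have := congrArg (fun z => z.1.2) h
    simp [hc'] at this
  have hlt := T.2.2 c c' (le_refl _) (by simp [hc']) hne
  have h1 := T_cmax h0 T
  have h2 := (T.1 c').isLt
  rw [h1] at hlt
  have := hlt
  simp only [Fin.lt_def] at this
  omega

lemma cmax_not_down (h0 : Y.card ≠ 0) (T : SYTsub Y) :
    ((cmax h0 T).1.1 + 1, (cmax h0 T).1.2) ∉ Y := by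
  intro hmem
  set c := cmax h0 T with hc
  set c' : Y.cells := ⟨(c.1.1 + 1, c.1.2), (mem_cells _).2 hmem⟩ with hc'
  have hne : c ≠ c' := by
    intro h
    have := congrArg (fun z => z.1.1) h
    simp [hc'] at this
  have hlt := T.2.2 c c' (by simp [hc']) (le_refl _) hne
  have h1 := T_cmax h0 T
  have h2 := (T.1 c').isLt
  rw [h1] at hlt
  simp only [Fin.lt_def] at hlt
  omega

/-- the row of the top cell -/
def rho (h0 : Y.card ≠ 0) (T : SYTsub Y) : ℕ := (cmax h0 T).1.1

lemma rho_corner (h0 : Y.card ≠ 0) (T : SYTsub Y) :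
    Y.rowLen (rho h0 T + 1) < Y.rowLen (rho h0 T) := by
  have hmem : (cmax h0 T).1 ∈ Y := (mem_cells _).1 (cmax h0 T).2
  have h1 : (cmax h0 T).1.2 < Y.rowLen (rho h0 T) := by
    have := mem_iff_lt_rowLen.1 (show ((cmax h0 T).1.1, (cmax h0 T).1.2) ∈ Y by
      simpa using hmem)
    exact this
  have h2 : ¬ ((cmax h0 T).1.2 + 1 < Y.rowLen (rho h0 T)) := by
    intro h
    exact cmax_not_right h0 T (mem_iff_lt_rowLen.2 h)
  have h3 : ¬ ((cmax h0 T).1.2 < Y.rowLen (rho h0 T + 1)) := by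
    intro h
    exact cmax_not_down h0 T (mem_iff_lt_rowLen.2 h)
  omega

lemma cmax_eq_cell (h0 : Y.card ≠ 0) (T : SYTsub Y) :
    (cmax h0 T).1 = (rho h0 T, Y.rowLen (rho h0 T) - 1) := by
  have hmem : (cmax h0 T).1 ∈ Y := (mem_cells _).1 (cmax h0 T).2
  have h1 : (cmax h0 T).1.2 < Y.rowLen (rho h0 T) := by
    have := mem_iff_lt_rowLen.1 (show ((cmax h0 T).1.1, (cmax h0 T).1.2) ∈ Y by
      simpa using hmem)
    exact this
  have h2 : ¬ ((cmax h0 T).1.2 + 1 < Y.rowLen (rho h0 T)) := by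
    intro h
    exact cmax_not_right h0 T (mem_iff_lt_rowLen.2 h)
  have : (cmax h0 T).1.2 = Y.rowLen (rho h0 T) - 1 := by omega
  rw [Prod.ext_iff]
  exact ⟨rfl, this⟩


/-- delete the corner in row `r` (junk value `Y` if row `r` has no corner). -/
def eraseRow (Y : YoungDiagram) (r : ℕ) : YoungDiagram :=
  if h : Y.rowLen (r+1) < Y.rowLen r then
    { cells := Y.cells.erase (r, Y.rowLen r - 1)
      isLowerSet := by
        intro y x hxy hy
        simp only [Finset.coe_erase, Set.mem_diff, Finset.mem_coe, mem_cells,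
          Set.mem_singleton_iff] at hy ⊢
        obtain ⟨hyY, hyne⟩ := hy
        refine ⟨Y.isLowerSet hxy hyY, ?_⟩
        rintro rfl
        obtain ⟨hr1, hr2⟩ := hxy
        simp only at hr1 hr2
        rcases eq_or_lt_of_le hr1 with he | hlt
        · -- y.1 = r
          apply hyne
          have h2 : y.2 < Y.rowLen r := by
            have := (YoungDiagram.mem_iff_lt_rowLen (μ := Y) (i := y.1) (j := y.2)).1
              (by simpa using hyY)
            rwa [← he] at this
          have h3 : y.2 = Y.rowLen r - 1 := by omega
          rw [Prod.ext_iff]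
          exact ⟨he.symm, h3⟩
        · -- r < y.1
          exfalso
          have h2 : y.2 < Y.rowLen y.1 :=
            (mem_iff_lt_rowLen (μ := Y) (i := y.1) (j := y.2)).1 (by simpa using hyY)
          have h3 : Y.rowLen y.1 ≤ Y.rowLen (r+1) := Y.rowLen_anti _ _ hlt
          omega }
  else Y

lemma mem_eraseRow {Y : YoungDiagram} {r : ℕ} (h : Y.rowLen (r+1) < Y.rowLen r) {c : ℕ × ℕ} :
    c ∈ eraseRow Y r ↔ c ∈ Y ∧ c ≠ (r, Y.rowLen r - 1) := by
  rw [eraseRow, dif_pos h]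
  change c ∈ Finset.erase _ _ ↔ _
  rw [Finset.mem_erase]
  exact and_comm.trans (by rw [mem_cells])

lemma cells_eraseRow {Y : YoungDiagram} {r : ℕ} (h : Y.rowLen (r+1) < Y.rowLen r) :
    (eraseRow Y r).cells = Y.cells.erase (r, Y.rowLen r - 1) := by
  rw [eraseRow, dif_pos h]

lemma rowLen_eq_of {Y : YoungDiagram} {i k : ℕ} (h1 : ∀ j, j < k → (i, j) ∈ Y)
    (h2 : (i, k) ∉ Y) : Y.rowLen i = k := by
  have hle : Y.rowLen i ≤ k := by
    by_contra hlt
    exact h2 (mem_iff_lt_rowLen.2 (by omega))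
  have hge : k ≤ Y.rowLen i := by
    by_contra hlt
    exact absurd (mem_iff_lt_rowLen.1 (h1 (Y.rowLen i) (by omega))) (by omega)
  omega

lemma corner_mem {Y : YoungDiagram} {r : ℕ} (h : Y.rowLen (r+1) < Y.rowLen r) :
    (r, Y.rowLen r - 1) ∈ Y := mem_iff_lt_rowLen.2 (by omega)

lemma rowLen_eraseRow_self {Y : YoungDiagram} {r : ℕ} (h : Y.rowLen (r+1) < Y.rowLen r) :
    (eraseRow Y r).rowLen r = Y.rowLen r - 1 := by
  apply rowLen_eq_of
  · intro j hj
    rw [mem_eraseRow h]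
    constructor
    · exact mem_iff_lt_rowLen.2 (by omega)
    · simp only [ne_eq, Prod.mk.injEq]
      omega
  · rw [mem_eraseRow h]
    rintro ⟨hmem, hne⟩
    exact hne (by simp)

lemma rowLen_eraseRow_ne {Y : YoungDiagram} {r i : ℕ} (h : Y.rowLen (r+1) < Y.rowLen r)
    (hi : i ≠ r) : (eraseRow Y r).rowLen i = Y.rowLen i := by
  apply rowLen_eq_of
  · intro j hj
    rw [mem_eraseRow h]
    refine ⟨mem_iff_lt_rowLen.2 hj, by simp [Prod.ext_iff, hi]⟩
  · rw [mem_eraseRow h]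
    rintro ⟨hmem, -⟩
    exact absurd (mem_iff_lt_rowLen.1 hmem) (by omega)

lemma card_eraseRow {Y : YoungDiagram} {r : ℕ} (h : Y.rowLen (r+1) < Y.rowLen r) :
    (eraseRow Y r).card = Y.card - 1 := by
  rw [YoungDiagram.card, YoungDiagram.card, cells_eraseRow h,
    Finset.card_erase_of_mem ((YoungDiagram.mem_cells _).2 (corner_mem h))]

lemma colLen_le_of_subset {μ ν : YoungDiagram} (h : μ.cells ⊆ ν.cells) (j : ℕ) :
    μ.colLen j ≤ ν.colLen j := by
  by_contra hlt
  push_neg at hlt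
  have h1 : ((ν.colLen j, j) : ℕ × ℕ) ∈ μ := mem_iff_lt_colLen.2 hlt
  have h2 := h ((YoungDiagram.mem_cells _).2 h1)
  rw [YoungDiagram.mem_cells, mem_iff_lt_colLen] at h2
  omega

lemma colLen_eraseRow_le {Y : YoungDiagram} {r : ℕ} (h : Y.rowLen (r+1) < Y.rowLen r) :
    (eraseRow Y r).colLen 0 ≤ Y.colLen 0 := by
  apply colLen_le_of_subset
  rw [cells_eraseRow h]
  exact Finset.erase_subset _ _

lemma rowLen_pos_iff {Y : YoungDiagram} {r : ℕ} : 0 < Y.rowLen r ↔ r < Y.colLen 0 := by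
  rw [← mem_iff_lt_rowLen, ← mem_iff_lt_colLen]


section Branch

variable {Y : YoungDiagram} {r : ℕ}

lemma memY_of_mem_erase (hr : Y.rowLen (r+1) < Y.rowLen r) {c : ℕ × ℕ}
    (hc : c ∈ (eraseRow Y r).cells) : c ∈ Y.cells := by
  rw [cells_eraseRow hr] at hc
  exact Finset.mem_of_mem_erase hc

lemma ne_ccell_of_mem_erase (hr : Y.rowLen (r+1) < Y.rowLen r) {c : ℕ × ℕ}
    (hc : c ∈ (eraseRow Y r).cells) : c ≠ (r, Y.rowLen r - 1) := by
  rw [cells_eraseRow hr] at hc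
  exact Finset.ne_of_mem_erase hc

lemma mem_erase_cells (hr : Y.rowLen (r+1) < Y.rowLen r) {c : ℕ × ℕ}
    (h1 : c ∈ Y.cells) (h2 : c ≠ (r, Y.rowLen r - 1)) : c ∈ (eraseRow Y r).cells := by
  rw [cells_eraseRow hr]
  exact Finset.mem_erase.2 ⟨h2, h1⟩

/-- restriction of a tableau to the erased diagram -/
def down (h0 : Y.card ≠ 0) (hr : Y.rowLen (r+1) < Y.rowLen r)
    (X : {T : SYTsub Y // rho h0 T = r}) :
    (eraseRow Y r).cells → Fin ((eraseRow Y r).card) := fun c =>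
  ⟨(X.1.1 ⟨c.1, memY_of_mem_erase hr c.2⟩).1, by
    have hlt := (X.1.1 ⟨c.1, memY_of_mem_erase hr c.2⟩).isLt
    have hcard := card_eraseRow hr
    have hne : (X.1.1 ⟨c.1, memY_of_mem_erase hr c.2⟩).1 ≠ Y.card - 1 := by
      intro heq
      have h1 : X.1.1 ⟨c.1, memY_of_mem_erase hr c.2⟩ = X.1.1 (cmax h0 X.1) := by
        rw [T_cmax h0 X.1]
        exact Fin.ext heq
      have h2 := X.1.2.1.1 h1
      have h3 : c.1 = (cmax h0 X.1).1 := congrArg Subtype.val h2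
      rw [cmax_eq_cell h0 X.1, X.2] at h3
      exact ne_ccell_of_mem_erase hr c.2 h3
    omega⟩

lemma down_val (h0 : Y.card ≠ 0) (hr : Y.rowLen (r+1) < Y.rowLen r)
    (X : {T : SYTsub Y // rho h0 T = r}) (c : (eraseRow Y r).cells) :
    (down h0 hr X c).1 = (X.1.1 ⟨c.1, memY_of_mem_erase hr c.2⟩).1 := rfl

lemma down_SYT (h0 : Y.card ≠ 0) (hr : Y.rowLen (r+1) < Y.rowLen r)
    (X : {T : SYTsub Y // rho h0 T = r}) :
    Function.Bijective (down h0 hr X) ∧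
    ∀ c₁ c₂ : (eraseRow Y r).cells, c₁.1.1 ≤ c₂.1.1 → c₁.1.2 ≤ c₂.1.2 → c₁ ≠ c₂ →
      down h0 hr X c₁ < down h0 hr X c₂ := by
  refine ⟨⟨?_, ?_⟩, ?_⟩
  · -- injective
    intro a b hab
    have h1 : (X.1.1 ⟨a.1, memY_of_mem_erase hr a.2⟩).1
        = (X.1.1 ⟨b.1, memY_of_mem_erase hr b.2⟩).1 := by
      rw [← down_val h0 hr X a, ← down_val h0 hr X b, hab]
    have h2 := X.1.2.1.1 (Fin.ext h1)
    have h3 := congrArg Subtype.val h2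
    exact Subtype.ext h3
  · -- surjective
    intro k
    have hcard := card_eraseRow hr
    obtain ⟨c, hc⟩ := X.1.2.1.2 ⟨k.1, by omega⟩
    have hcne : c ≠ cmax h0 X.1 := by
      intro heq
      rw [heq, T_cmax h0 X.1] at hc
      have := congrArg Fin.val hc
      simp only at this
      omega
    have hcval : c.1 ≠ (r, Y.rowLen r - 1) := by
      intro heq
      apply hcne
      apply Subtype.ext
      rw [cmax_eq_cell h0 X.1, X.2]
      exact heq
    have hcmem : c.1 ∈ (eraseRow Y r).cells := mem_erase_cells hr c.2 hcval
    refine ⟨⟨c.1, hcmem⟩, ?_⟩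
    apply Fin.ext
    rw [down_val]
    have hc2 : (⟨c.1, memY_of_mem_erase hr hcmem⟩ : Y.cells) = c := Subtype.ext rfl
    rw [hc2, hc]
  · -- monotone
    intro c₁ c₂ h1 h2 hne
    have hne' : (⟨c₁.1, memY_of_mem_erase hr c₁.2⟩ : Y.cells)
        ≠ ⟨c₂.1, memY_of_mem_erase hr c₂.2⟩ := by
      intro h
      have h3 := congrArg Subtype.val h
      exact hne (Subtype.ext h3)
    have hlt := X.1.2.2 _ _ h1 h2 hne'
    rw [Fin.lt_def] at hlt ⊢
    rw [down_val, down_val]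
    exact hlt

def toE (h0 : Y.card ≠ 0) (hr : Y.rowLen (r+1) < Y.rowLen r)
    (X : {T : SYTsub Y // rho h0 T = r}) :
    SYTsub (eraseRow Y r) := ⟨down h0 hr X, down_SYT h0 hr X⟩

def upFun (h0 : Y.card ≠ 0) (hr : Y.rowLen (r+1) < Y.rowLen r) (T' : SYTsub (eraseRow Y r)) :
    Y.cells → Fin Y.card := fun c =>
  if h : c.1 = (r, Y.rowLen r - 1) then ⟨Y.card - 1, by omega⟩
  else ⟨(T'.1 ⟨c.1, mem_erase_cells hr c.2 h⟩).1, by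
    have := (T'.1 ⟨c.1, mem_erase_cells hr c.2 h⟩).isLt
    have hcard := card_eraseRow hr
    omega⟩

lemma upFun_pos (h0 : Y.card ≠ 0) (hr : Y.rowLen (r+1) < Y.rowLen r)
    (T' : SYTsub (eraseRow Y r)) {c : Y.cells} (h : c.1 = (r, Y.rowLen r - 1)) :
    (upFun h0 hr T' c).1 = Y.card - 1 := by
  unfold upFun
  rw [dif_pos h]

lemma upFun_neg (h0 : Y.card ≠ 0) (hr : Y.rowLen (r+1) < Y.rowLen r)
    (T' : SYTsub (eraseRow Y r)) {c : Y.cells} (h : ¬ (c.1 = (r, Y.rowLen r - 1)))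
    (m : c.1 ∈ (eraseRow Y r).cells) :
    (upFun h0 hr T' c).1 = (T'.1 ⟨c.1, m⟩).1 := by
  unfold upFun
  rw [dif_neg h]

lemma not_ge_corner {Y : YoungDiagram} {r : ℕ} (hr : Y.rowLen (r+1) < Y.rowLen r)
    {c : ℕ × ℕ} (hc : c ∈ Y) (h1 : r ≤ c.1) (h2 : Y.rowLen r - 1 ≤ c.2)
    (hne : c ≠ (r, Y.rowLen r - 1)) : False := by
  have hcm : c.2 < Y.rowLen c.1 := mem_iff_lt_rowLen.1 (by simpa using hc)
  rcases eq_or_lt_of_le h1 with he | hlt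
  · rw [← he] at hcm
    have h3 : c.2 = Y.rowLen r - 1 := by omega
    exact hne (Prod.ext he.symm h3)
  · have h3 : Y.rowLen c.1 ≤ Y.rowLen (r+1) := Y.rowLen_anti _ _ hlt
    omega

lemma upFun_SYT (h0 : Y.card ≠ 0) (hr : Y.rowLen (r+1) < Y.rowLen r)
    (T' : SYTsub (eraseRow Y r)) :
    Function.Bijective (upFun h0 hr T') ∧
    ∀ c₁ c₂ : Y.cells, c₁.1.1 ≤ c₂.1.1 → c₁.1.2 ≤ c₂.1.2 → c₁ ≠ c₂ →
      upFun h0 hr T' c₁ < upFun h0 hr T' c₂ := by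
  have hcard := card_eraseRow hr
  refine ⟨⟨?_, ?_⟩, ?_⟩
  · intro a b hab
    have hv : (upFun h0 hr T' a).1 = (upFun h0 hr T' b).1 := congrArg Fin.val hab
    by_cases ha : a.1 = (r, Y.rowLen r - 1) <;> by_cases hb : b.1 = (r, Y.rowLen r - 1)
    · exact Subtype.ext (ha.trans hb.symm)
    · exfalso
      rw [upFun_pos h0 hr T' ha, upFun_neg h0 hr T' hb (mem_erase_cells hr b.2 hb)] at hv
      have hlt := (T'.1 ⟨b.1, mem_erase_cells hr b.2 hb⟩).isLt
      omega
    · exfalso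
      rw [upFun_neg h0 hr T' ha (mem_erase_cells hr a.2 ha), upFun_pos h0 hr T' hb] at hv
      have hlt := (T'.1 ⟨a.1, mem_erase_cells hr a.2 ha⟩).isLt
      omega
    · rw [upFun_neg h0 hr T' ha (mem_erase_cells hr a.2 ha),
        upFun_neg h0 hr T' hb (mem_erase_cells hr b.2 hb)] at hv
      have h2 := T'.2.1.1 (Fin.ext hv)
      have h3 := congrArg Subtype.val h2
      exact Subtype.ext h3
  · intro k
    by_cases hk : k.1 = Y.card - 1
    · refine ⟨⟨(r, Y.rowLen r - 1), (mem_cells _).2 (corner_mem hr)⟩, ?_⟩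
      apply Fin.ext
      rw [upFun_pos h0 hr T' rfl, hk]
    · have hk2 : k.1 < (eraseRow Y r).card := by have := k.isLt; omega
      obtain ⟨c', hc'⟩ := T'.2.1.2 ⟨k.1, hk2⟩
      refine ⟨⟨c'.1, memY_of_mem_erase hr c'.2⟩, ?_⟩
      apply Fin.ext
      rw [upFun_neg h0 hr T' (ne_ccell_of_mem_erase hr c'.2) c'.2]
      have hc2 : (⟨c'.1, c'.2⟩ : (eraseRow Y r).cells) = c' := Subtype.ext rfl
      rw [hc2, hc']
  · intro c₁ c₂ h1 h2 hne
    rw [Fin.lt_def]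
    by_cases ha : c₁.1 = (r, Y.rowLen r - 1) <;> by_cases hb : c₂.1 = (r, Y.rowLen r - 1)
    · exact absurd (Subtype.ext (ha.trans hb.symm)) hne
    · exfalso
      apply not_ge_corner hr ((mem_cells _).1 c₂.2) _ _ hb
      · rw [← (show c₁.1.1 = r from congrArg Prod.fst ha)]; exact h1
      · rw [← (show c₁.1.2 = Y.rowLen r - 1 from congrArg Prod.snd ha)]; exact h2
    · rw [upFun_neg h0 hr T' ha (mem_erase_cells hr c₁.2 ha), upFun_pos h0 hr T' hb]
      have hlt := (T'.1 ⟨c₁.1, mem_erase_cells hr c₁.2 ha⟩).isLt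
      omega
    · rw [upFun_neg h0 hr T' ha (mem_erase_cells hr c₁.2 ha),
        upFun_neg h0 hr T' hb (mem_erase_cells hr c₂.2 hb)]
      have hne' : (⟨c₁.1, mem_erase_cells hr c₁.2 ha⟩ : (eraseRow Y r).cells)
          ≠ ⟨c₂.1, mem_erase_cells hr c₂.2 hb⟩ := by
        intro h
        have h3 := congrArg Subtype.val h
        exact hne (Subtype.ext h3)
      have hlt := T'.2.2 _ _ h1 h2 hne'
      rw [Fin.lt_def] at hlt
      exact hlt

lemma rho_upFun (h0 : Y.card ≠ 0) (hr : Y.rowLen (r+1) < Y.rowLen r)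
    (T' : SYTsub (eraseRow Y r)) :
    rho h0 ⟨upFun h0 hr T', upFun_SYT h0 hr T'⟩ = r := by
  have key : cmax h0 ⟨upFun h0 hr T', upFun_SYT h0 hr T'⟩
      = ⟨(r, Y.rowLen r - 1), (mem_cells _).2 (corner_mem hr)⟩ := by
    rw [cmax, Equiv.symm_apply_eq]
    apply Fin.ext
    exact (upFun_pos h0 hr T' rfl).symm
  rw [rho, key]

def fromE (h0 : Y.card ≠ 0) (hr : Y.rowLen (r+1) < Y.rowLen r) (T' : SYTsub (eraseRow Y r)) :
    {T : SYTsub Y // rho h0 T = r} :=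
  ⟨⟨upFun h0 hr T', upFun_SYT h0 hr T'⟩, rho_upFun h0 hr T'⟩

def fiberEquiv (h0 : Y.card ≠ 0) (hr : Y.rowLen (r+1) < Y.rowLen r) :
    {T : SYTsub Y // rho h0 T = r} ≃ SYTsub (eraseRow Y r) where
  toFun := toE h0 hr
  invFun := fromE h0 hr
  left_inv := by
    intro X
    apply Subtype.ext
    apply Subtype.ext
    funext c
    apply Fin.ext
    show (upFun h0 hr (toE h0 hr X) c).1 = (X.1.1 c).1
    by_cases h : c.1 = (r, Y.rowLen r - 1)
    · rw [upFun_pos h0 hr _ h]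
      have hc : c = cmax h0 X.1 := by
        apply Subtype.ext
        rw [cmax_eq_cell h0 X.1, X.2]
        exact h
      rw [hc, T_cmax h0 X.1]
    · rw [upFun_neg h0 hr _ h (mem_erase_cells hr c.2 h)]
      exact down_val h0 hr X ⟨c.1, mem_erase_cells hr c.2 h⟩
  right_inv := by
    intro T'
    apply Subtype.ext
    funext c
    apply Fin.ext
    show (down h0 hr (fromE h0 hr T') c).1 = (T'.1 c).1
    rw [down_val]
    show (upFun h0 hr T' ⟨c.1, _⟩).1 = _
    rw [upFun_neg h0 hr T' (ne_ccell_of_mem_erase hr c.2) c.2]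

lemma card_fiber (h0 : Y.card ≠ 0) (hr : Y.rowLen (r+1) < Y.rowLen r) :
    Nat.card {T : SYTsub Y // rho h0 T = r} = numSYT (eraseRow Y r) := by
  rw [numSYT_def]
  exact Nat.card_congr (fiberEquiv h0 hr)

end Branch

lemma branching (Y : YoungDiagram) (h0 : Y.card ≠ 0) (d : ℕ) (hd : Y.colLen 0 < d) :
    numSYT Y = ∑ r ∈ (Finset.range d).filter (fun r => Y.rowLen (r+1) < Y.rowLen r),
      numSYT (eraseRow Y r) := by
  classical
  haveI : Fintype (SYTsub Y) := Fintype.ofFinite _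
  rw [numSYT_def, Nat.card_eq_fintype_card]
  have hmap : ∀ T : SYTsub Y, T ∈ Finset.univ →
      rho h0 T ∈ (Finset.range d).filter (fun r => Y.rowLen (r+1) < Y.rowLen r) := by
    intro T _
    rw [Finset.mem_filter, Finset.mem_range]
    have hc := rho_corner h0 T
    have hpos : 0 < Y.rowLen (rho h0 T) := by omega
    have := rowLen_pos_iff.1 hpos
    exact ⟨by omega, hc⟩
  rw [show Fintype.card (SYTsub Y) = Finset.univ.card from rfl]
  rw [Finset.card_eq_sum_card_fiberwise hmap]
  refine Finset.sum_congr rfl (fun r hr => ?_)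
  rw [Finset.mem_filter] at hr
  have hcorner := hr.2
  have h1 : (Finset.univ.filter (fun T => rho h0 T = r)).card
      = Fintype.card {T : SYTsub Y // rho h0 T = r} := (Fintype.card_subtype _).symm
  rw [h1, ← Nat.card_eq_fintype_card]
  exact card_fiber h0 hcorner

section Poly
open Polynomial Lagrange Finset

variable {ι : Type*} [DecidableEq ι]

lemma nodal_coeff_card (s : Finset ι) (f : ι → ℚ) :
    (nodal s f).coeff s.card = 1 := by
  have h1 := Lagrange.nodal_monic (s := s) (v := f)
  have h2 : (nodal s f).natDegree = s.card := Lagrange.natDegree_nodal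
  rw [← h2]
  exact h1.coeff_natDegree

lemma nodal_coeff_sub_one (s : Finset ι) (f : ι → ℚ) (hs : 0 < s.card) :
    (nodal s f).coeff (s.card - 1) = -∑ i ∈ s, f i := by
  rw [Lagrange.nodal_eq]
  exact Polynomial.prod_X_sub_C_coeff_card_pred s f hs

lemma nodal_coeff_sub_two (s : Finset ι) (f : ι → ℚ) (hs : 2 ≤ s.card) :
    (nodal s f).coeff (s.card - 2) = ((∑ i ∈ s, f i)^2 - ∑ i ∈ s, (f i)^2) / 2 := by
  induction s using Finset.induction_on with
  | empty => simp at hs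
  | @insert a s ha IH =>
    rw [Finset.card_insert_of_notMem ha] at hs ⊢
    rw [Lagrange.nodal_insert_eq_nodal ha]
    rcases Nat.lt_or_ge s.card 2 with h2 | h2
    · -- s.card = 1
      have hc1 : s.card = 1 := by omega
      obtain ⟨b, rfl⟩ := Finset.card_eq_one.1 hc1
      have hab : a ≠ b := by
        intro h
        exact ha (h ▸ Finset.mem_singleton_self b)
      simp only [Lagrange.nodal, Finset.prod_singleton, hc1]
      rw [show (1 + 1 - 2 : ℕ) = 0 from rfl]
      rw [Polynomial.mul_coeff_zero]
      simp [Finset.sum_insert ha]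
      ring
    · have hcard : s.card + 1 - 2 = (s.card - 2) + 1 := by omega
      rw [sub_mul, hcard, Polynomial.coeff_sub, Polynomial.coeff_X_mul,
        Polynomial.coeff_C_mul]
      have hc2 : s.card - 2 + 1 = s.card - 1 := by omega
      rw [hc2, IH h2, nodal_coeff_sub_one s f (by omega), Finset.sum_insert ha,
        Finset.sum_insert ha]
      ring

lemma basis_coeff (s : Finset ι) (f : ι → ℚ) (hvs : Set.InjOn f s) {i : ι} (hi : i ∈ s) :
    (Lagrange.basis s f i).coeff (s.card - 1) = nodalWeight s f i := by
  rw [Lagrange.basis_eq_prod_sub_inv_mul_nodal_div hi,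
    ← Lagrange.nodal_erase_eq_nodal_div hi, Polynomial.coeff_C_mul]
  have h2 : (nodal (s.erase i) f).natDegree = (s.erase i).card := Lagrange.natDegree_nodal
  have h3 : (s.erase i).card = s.card - 1 := Finset.card_erase_of_mem hi
  rw [show s.card - 1 = (nodal (s.erase i) f).natDegree by rw [h2, h3]]
  rw [Lagrange.nodal_monic.coeff_natDegree, mul_one]

lemma dd_sum {s : Finset ι} {v : ι → ℚ} (hvs : Set.InjOn v s)
    (p : Polynomial ℚ) (hdeg : p.degree < s.card) :
    ∑ i ∈ s, p.eval (v i) * Lagrange.nodalWeight s v i = p.coeff (s.card - 1) := by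
  conv_rhs => rw [Lagrange.eq_interpolate hvs hdeg]
  rw [Lagrange.interpolate_apply, Polynomial.finset_sum_coeff]
  refine Finset.sum_congr rfl (fun i hi => ?_)
  rw [Polynomial.coeff_C_mul, basis_coeff s v hvs hi]

lemma keyIdentity (d : ℕ) (hd : 2 ≤ d) (x : ℕ → ℚ)
    (hinj : Set.InjOn x (Finset.range d)) :
    ∑ r ∈ Finset.range d, x r * (∏ k ∈ (Finset.range d).erase r, (x r - 1 - x k))
        * Lagrange.nodalWeight (Finset.range d) x r
    = (∑ i ∈ Finset.range d, x i) - (d * (d - 1) : ℚ) / 2 := by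
  set s := Finset.range d with hs
  have hcard : s.card = d := Finset.card_range d
  set N : Polynomial ℚ := nodal s x with hN
  set N1 : Polynomial ℚ := nodal s (fun k => x k + 1) with hN1
  set R : Polynomial ℚ := X * N1 - (X - C (d : ℚ)) * N with hR
  -- sums
  have hs1 : ∑ i ∈ s, (x i + 1) = (∑ i ∈ s, x i) + d := by
    rw [Finset.sum_add_distrib, Finset.sum_const, hcard]
    simp
  have hs2 : ∑ i ∈ s, (x i + 1)^2 = (∑ i ∈ s, (x i)^2) + 2 * (∑ i ∈ s, x i) + d := by
    have : ∀ i ∈ s, (x i + 1)^2 = (x i)^2 + (2 * x i + 1) := by intro i _; ring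
    rw [Finset.sum_congr rfl this, Finset.sum_add_distrib, Finset.sum_add_distrib,
      ← Finset.mul_sum, Finset.sum_const, hcard]
    simp
    ring
  -- degrees
  have hNdeg : N.natDegree = d := by rw [hN, Lagrange.natDegree_nodal, hcard]
  have hN1deg : N1.natDegree = d := by rw [hN1, Lagrange.natDegree_nodal, hcard]
  have hNmonic : N.Monic := Lagrange.nodal_monic
  have hN1monic : N1.Monic := Lagrange.nodal_monic
  -- coefficients of R
  have hcoeffR : ∀ m : ℕ, d ≤ m → R.coeff m = 0 := by
    intro m hm
    rw [hR, Polynomial.coeff_sub]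
    have hXN1 : (X * N1).coeff m = N1.coeff (m - 1) := by
      rcases Nat.exists_eq_add_of_le' (show 1 ≤ m by omega) with ⟨m', rfl⟩
      rw [Polynomial.coeff_X_mul]
      simp
    have hXCN : ((X - C (d : ℚ)) * N).coeff m = N.coeff (m - 1) - d * N.coeff m := by
      rw [sub_mul, Polynomial.coeff_sub, Polynomial.coeff_C_mul]
      rcases Nat.exists_eq_add_of_le' (show 1 ≤ m by omega) with ⟨m', rfl⟩
      rw [Polynomial.coeff_X_mul]
      simp
    rw [hXN1, hXCN]
    rcases Nat.lt_or_ge m (d + 1) with hm1 | hm1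
    · -- m = d
      have hmd : m = d := by omega
      subst hmd
      have e1 : N1.coeff (m - 1) = -∑ i ∈ s, (x i + 1) := by
        rw [hN1, show m - 1 = s.card - 1 by omega]
        exact nodal_coeff_sub_one s _ (by omega)
      have e2 : N.coeff (m - 1) = -∑ i ∈ s, x i := by
        rw [hN, show m - 1 = s.card - 1 by omega]
        exact nodal_coeff_sub_one s _ (by omega)
      have e3 : N.coeff m = 1 := by
        rw [hN, show m = s.card by omega]; exact nodal_coeff_card s x
      rw [e1, e2, e3, hs1]
      ring
    · -- m > d
      rcases Nat.lt_or_ge m (d + 2) with hm2 | hm2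
      · have hmd : m = d + 1 := by omega
        subst hmd
        have e1 : N1.coeff (d + 1 - 1) = 1 := by
          rw [show d + 1 - 1 = d from rfl, ← hN1deg]
          exact hN1monic.coeff_natDegree
        have e2 : N.coeff (d + 1 - 1) = 1 := by
          rw [show d + 1 - 1 = d from rfl, ← hNdeg]
          exact hNmonic.coeff_natDegree
        have e3 : N.coeff (d + 1) = 0 := by
          apply Polynomial.coeff_eq_zero_of_natDegree_lt
          omega
        rw [e1, e2, e3]
        ring
      · have e1 : N1.coeff (m - 1) = 0 := by
          apply Polynomial.coeff_eq_zero_of_natDegree_lt; omega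
        have e2 : N.coeff (m - 1) = 0 := by
          apply Polynomial.coeff_eq_zero_of_natDegree_lt; omega
        have e3 : N.coeff m = 0 := by
          apply Polynomial.coeff_eq_zero_of_natDegree_lt; omega
        rw [e1, e2, e3]
        ring
  have hRdeg : R.degree < s.card := by
    rw [hcard]
    rw [Polynomial.degree_lt_iff_coeff_zero]
    intro m hm
    exact hcoeffR m (by exact_mod_cast hm)
  -- the divided difference of R
  have hdd := dd_sum (s := s) (v := x) hinj R hRdeg
  -- eval of R at nodes
  have hevalR : ∀ i ∈ s, R.eval (x i) = -(x i * ∏ k ∈ s.erase i, (x i - 1 - x k)) := by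
    intro i hi
    rw [hR]
    simp only [Polynomial.eval_sub, Polynomial.eval_mul, Polynomial.eval_X,
      Polynomial.eval_C]
    have hNeval : N.eval (x i) = 0 := Lagrange.eval_nodal_at_node hi
    rw [hNeval, mul_zero, sub_zero]
    have hN1eval : N1.eval (x i) = ∏ k ∈ s, (x i - (x k + 1)) := by
      rw [hN1, Lagrange.eval_nodal]
    rw [hN1eval, ← Finset.mul_prod_erase s _ hi]
    have : x i - (x i + 1) = -1 := by ring
    rw [this]
    have : ∏ k ∈ s.erase i, (x i - (x k + 1)) = ∏ k ∈ s.erase i, (x i - 1 - x k) :=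
      Finset.prod_congr rfl (fun k _ => by ring)
    rw [this]
    ring
  -- R.coeff (d-1)
  have hRc : R.coeff (d - 1) = (d * (d - 1) : ℚ) / 2 - ∑ i ∈ s, x i := by
    rw [hR, Polynomial.coeff_sub]
    have hXN1 : (X * N1).coeff (d - 1) = N1.coeff (d - 2) := by
      rcases Nat.exists_eq_add_of_le' (show 1 ≤ d - 1 by omega) with ⟨m', hm'⟩
      rw [hm', Polynomial.coeff_X_mul]
      congr 1
      omega
    have hXCN : ((X - C (d : ℚ)) * N).coeff (d - 1)
        = N.coeff (d - 2) - d * N.coeff (d - 1) := by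
      rw [sub_mul, Polynomial.coeff_sub, Polynomial.coeff_C_mul]
      rcases Nat.exists_eq_add_of_le' (show 1 ≤ d - 1 by omega) with ⟨m', hm'⟩
      rw [hm', Polynomial.coeff_X_mul]
      congr 2
      omega
    have e1 : N1.coeff (d - 2) = ((∑ i ∈ s, (x i + 1))^2 - ∑ i ∈ s, (x i + 1)^2) / 2 := by
      rw [hN1, show d - 2 = s.card - 2 by omega]
      exact nodal_coeff_sub_two s _ (by omega)
    have e2 : N.coeff (d - 2) = ((∑ i ∈ s, x i)^2 - ∑ i ∈ s, (x i)^2) / 2 := by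
      rw [hN, show d - 2 = s.card - 2 by omega]
      exact nodal_coeff_sub_two s _ (by omega)
    have e3 : N.coeff (d - 1) = -∑ i ∈ s, x i := by
      rw [hN, show d - 1 = s.card - 1 by omega]
      exact nodal_coeff_sub_one s _ (by omega)
    rw [hXN1, hXCN, e1, e2, e3, hs1, hs2]
    have hdcast : ((d : ℚ) - 1) = ((d - 1 : ℕ) : ℚ) := by
      have : 1 ≤ d := by omega
      push_cast [this]
      ring
    field_simp
    ring
  -- conclude
  have hsum : ∑ i ∈ s, R.eval (x i) * Lagrange.nodalWeight s x i
      = -∑ r ∈ s, x r * (∏ k ∈ s.erase r, (x r - 1 - x k))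
          * Lagrange.nodalWeight s x r := by
    rw [← Finset.sum_neg_distrib]
    refine Finset.sum_congr rfl (fun i hi => ?_)
    rw [hevalR i hi]
    ring
  rw [hcard] at hdd
  rw [hsum] at hdd
  have := hdd
  rw [hRc] at this
  linarith [this]

end Poly

section Vdm
open Finset

/-- Vandermonde-type product. -/
def vdm (d : ℕ) (x : ℕ → ℚ) : ℚ :=
  ∏ i ∈ Finset.range d, ∏ j ∈ Finset.Ioo i d, (x i - x j)

lemma vdm_congr {d : ℕ} {x y : ℕ → ℚ} (h : ∀ i, i < d → x i = y i) :
    vdm d x = vdm d y := by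
  unfold vdm
  refine Finset.prod_congr rfl (fun i hi => Finset.prod_congr rfl (fun j hj => ?_))
  rw [Finset.mem_range] at hi
  rw [Finset.mem_Ioo] at hj
  rw [h i hi, h j hj.2]

lemma vdm_pos {d : ℕ} {x : ℕ → ℚ} (h : ∀ i j, i < j → j < d → x j < x i) :
    0 < vdm d x := by
  apply Finset.prod_pos
  intro i hi
  apply Finset.prod_pos
  intro j hj
  rw [Finset.mem_Ioo] at hj
  exact sub_pos.2 (h i j hj.1 hj.2)

lemma vdm_eq_zero {d i j : ℕ} {x : ℕ → ℚ} (hij : i < j) (hj : j < d) (h : x i = x j) :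
    vdm d x = 0 := by
  unfold vdm
  apply Finset.prod_eq_zero (Finset.mem_range.2 (lt_trans hij hj))
  apply Finset.prod_eq_zero (Finset.mem_Ioo.2 ⟨hij, hj⟩)
  rw [h, sub_self]

lemma erase_range_eq {d r : ℕ} (hr : r < d) :
    (Finset.range d).erase r = Finset.range r ∪ Finset.Ioo r d := by
  ext i
  simp only [Finset.mem_erase, Finset.mem_range, Finset.mem_union, Finset.mem_Ioo]
  omega

lemma vdm_split {d r : ℕ} (hr : r < d) (x : ℕ → ℚ) :
    vdm d x = (∏ i ∈ (Finset.range d).erase r, ∏ j ∈ (Finset.Ioo i d).erase r, (x i - x j))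
      * ((-1 : ℚ)^r * ∏ k ∈ (Finset.range d).erase r, (x r - x k)) := by
  unfold vdm
  rw [← Finset.mul_prod_erase (Finset.range d) _ (Finset.mem_range.2 hr)]
  have hinner : ∀ i ∈ (Finset.range d).erase r,
      ∏ j ∈ Finset.Ioo i d, (x i - x j)
        = (if i < r then (x i - x r) else 1) * ∏ j ∈ (Finset.Ioo i d).erase r, (x i - x j) := by
    intro i hi
    rw [Finset.mem_erase, Finset.mem_range] at hi
    by_cases hir : i < r
    · rw [if_pos hir]
      rw [← Finset.mul_prod_erase (Finset.Ioo i d) _ (Finset.mem_Ioo.2 ⟨hir, hr⟩)]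
    · rw [if_neg hir]
      rw [one_mul, Finset.erase_eq_of_notMem]
      rw [Finset.mem_Ioo]
      omega
  rw [Finset.prod_congr rfl hinner, Finset.prod_mul_distrib]
  have hite : (∏ i ∈ (Finset.range d).erase r, if i < r then (x i - x r) else 1)
      = ∏ i ∈ Finset.range r, (x i - x r) := by
    rw [← Finset.prod_filter]
    congr 1
    ext i
    simp only [Finset.mem_filter, Finset.mem_erase, Finset.mem_range]
    omega
  rw [hite]
  have hneg : ∏ i ∈ Finset.range r, (x i - x r)
      = (-1 : ℚ)^r * ∏ i ∈ Finset.range r, (x r - x i) := by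
    have h1 : ∀ i ∈ Finset.range r, x i - x r = (-1) * (x r - x i) := by
      intro i _; ring
    rw [Finset.prod_congr rfl h1, Finset.prod_mul_distrib, Finset.prod_const,
      Finset.card_range]
  rw [hneg]
  have hdisj : Disjoint (Finset.range r) (Finset.Ioo r d) := by
    rw [Finset.disjoint_left]
    intro a ha hb
    rw [Finset.mem_range] at ha
    rw [Finset.mem_Ioo] at hb
    omega
  have hunion : ∏ k ∈ (Finset.range d).erase r, (x r - x k)
      = (∏ k ∈ Finset.range r, (x r - x k)) * ∏ k ∈ Finset.Ioo r d, (x r - x k) := by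
    rw [erase_range_eq hr, Finset.prod_union hdisj]
  rw [hunion]
  ring

end Vdm

section Step
open Finset

lemma vdm_ratio {d r : ℕ} (hr : r < d) (x x' : ℕ → ℚ)
    (hagree : ∀ i, i ≠ r → x' i = x i) (hx'r : x' r = x r - 1) :
    vdm d x' * ∏ k ∈ (Finset.range d).erase r, (x r - x k)
      = vdm d x * ∏ k ∈ (Finset.range d).erase r, (x r - 1 - x k) := by
  rw [vdm_split hr x, vdm_split hr x']
  have hC : (∏ i ∈ (Finset.range d).erase r, ∏ j ∈ (Finset.Ioo i d).erase r, (x' i - x' j))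
      = ∏ i ∈ (Finset.range d).erase r, ∏ j ∈ (Finset.Ioo i d).erase r, (x i - x j) := by
    refine Finset.prod_congr rfl (fun i hi => Finset.prod_congr rfl (fun j hj => ?_))
    rw [hagree i (Finset.ne_of_mem_erase hi), hagree j (Finset.ne_of_mem_erase hj)]
  have hP : (∏ k ∈ (Finset.range d).erase r, (x' r - x' k))
      = ∏ k ∈ (Finset.range d).erase r, (x r - 1 - x k) := by
    refine Finset.prod_congr rfl (fun k hk => ?_)
    rw [hagree k (Finset.ne_of_mem_erase hk), hx'r]
  rw [hC, hP]
  ring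

lemma sum_step (d : ℕ) (hd : 2 ≤ d) (x : ℕ → ℚ)
    (hanti : ∀ i j, i < j → j < d → x j < x i) :
    ∑ r ∈ Finset.range d, x r * vdm d (Function.update x r (x r - 1))
      = ((∑ i ∈ Finset.range d, x i) - (d * (d - 1) : ℚ) / 2) * vdm d x := by
  have hinj : Set.InjOn x (Finset.range d) := by
    intro a ha b hb hab
    simp only [Finset.coe_range, Set.mem_Iio] at ha hb
    by_contra hne
    rcases Nat.lt_or_ge a b with h | h
    · exact absurd hab (ne_of_gt (hanti a b h hb))
    · have h2 : b < a := by omega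
      exact absurd hab.symm (ne_of_gt (hanti b a h2 ha))
  have key : ∀ r ∈ Finset.range d,
      x r * vdm d (Function.update x r (x r - 1))
        = vdm d x * (x r * (∏ k ∈ (Finset.range d).erase r, (x r - 1 - x k))
            * Lagrange.nodalWeight (Finset.range d) x r) := by
    intro r hrr
    rw [Finset.mem_range] at hrr
    have hrat := vdm_ratio hrr x (Function.update x r (x r - 1))
      (fun i hi => Function.update_of_ne hi _ _) (Function.update_self _ _ _)
    have hprodne : (∏ k ∈ (Finset.range d).erase r, (x r - x k)) ≠ 0 := by
      apply Finset.prod_ne_zero_iff.2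
      intro k hk
      rw [Finset.mem_erase, Finset.mem_range] at hk
      rcases Nat.lt_or_ge k r with h | h
      · exact sub_ne_zero.2 (ne_of_lt (hanti k r h hrr))
      · have h2 : r < k := by omega
        exact sub_ne_zero.2 (ne_of_gt (hanti r k h2 hk.2))
    have hW : Lagrange.nodalWeight (Finset.range d) x r
        = (∏ k ∈ (Finset.range d).erase r, (x r - x k))⁻¹ := by
      rw [Lagrange.nodalWeight, ← Finset.prod_inv_distrib]
    rw [hW]
    field_simp
    calc x r * vdm d (Function.update x r (x r - 1))
        * ∏ k ∈ (Finset.range d).erase r, (x r - x k)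
        = x r * (vdm d (Function.update x r (x r - 1))
            * ∏ k ∈ (Finset.range d).erase r, (x r - x k)) := by ring
      _ = x r * (vdm d x * ∏ k ∈ (Finset.range d).erase r, (x r - 1 - x k)) := by rw [hrat]
      _ = vdm d x * (x r * ∏ k ∈ (Finset.range d).erase r, (x r - 1 - x k)) := by ring
    ring
  rw [Finset.sum_congr rfl key, ← Finset.mul_sum, keyIdentity d hd x hinj]
  ring

end Step

section Base
open Finset

lemma numSYT_card_zero (Y : YoungDiagram) (h : Y.card = 0) : numSYT Y = 1 := by
  have hcells : Y.cells = ∅ := Finset.card_eq_zero.1 h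
  haveI : IsEmpty Y.cells := by
    refine ⟨fun x => ?_⟩
    exact Finset.eq_empty_iff_forall_notMem.1 hcells _ x.2
  rw [numSYT_def]
  rw [Nat.card_eq_one_iff_unique]
  constructor
  · constructor
    intro T T'
    apply Subtype.ext
    funext c
    exact isEmptyElim c
  · refine ⟨⟨fun c => isEmptyElim c, ⟨fun a => isEmptyElim a, fun k => ?_⟩, fun c => isEmptyElim c⟩⟩
    exfalso
    have := k.isLt
    omega

lemma rowLen_card_zero (Y : YoungDiagram) (h : Y.card = 0) (i : ℕ) : Y.rowLen i = 0 := by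
  by_contra hpos
  have h1 : (i, 0) ∈ Y := mem_iff_lt_rowLen.2 (by omega)
  have h2 : Y.cells = ∅ := Finset.card_eq_zero.1 h
  have := (YoungDiagram.mem_cells _).2 h1
  rw [h2] at this
  exact absurd this (Finset.notMem_empty _)

lemma prod_Ioo_fact (i d : ℕ) (hi : i < d) :
    ∏ j ∈ Finset.Ioo i d, ((j : ℚ) - (i : ℚ)) = (Nat.factorial (d - 1 - i) : ℚ) := by
  induction d with
  | zero => omega
  | succ d IH =>
    rcases Nat.lt_or_ge i d with h | h
    · have hIoo : Finset.Ioo i (d+1) = insert d (Finset.Ioo i d) := by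
        ext j
        simp only [Finset.mem_Ioo, Finset.mem_insert]
        omega
      rw [hIoo, Finset.prod_insert (by simp), mul_comm, IH h]
      have h1 : d + 1 - 1 - i = (d - 1 - i) + 1 := by omega
      rw [h1, Nat.factorial_succ]
      have h2 : ((d : ℚ) - (i : ℚ)) = ((d - 1 - i : ℕ) : ℚ) + 1 := by
        have : i ≤ d - 1 ∨ d = i := by omega
        push_cast [Nat.cast_sub (by omega : i ≤ d - 1), Nat.cast_sub (by omega : 1 ≤ d)]
        ring
      rw [h2]
      push_cast
      ring
    · have hid : i = d := by omega
      subst hid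
      rw [show Finset.Ioo i (i+1) = ∅ by ext j; simp]
      simp [show i + 1 - 1 - i = 0 by omega]

lemma superfactorial (d : ℕ) :
    vdm d (fun i => ((d - 1 - i : ℕ) : ℚ))
      = ∏ i ∈ Finset.range d, (Nat.factorial (d - 1 - i) : ℚ) := by
  unfold vdm
  refine Finset.prod_congr rfl (fun i hi => ?_)
  rw [Finset.mem_range] at hi
  have h1 : ∀ j ∈ Finset.Ioo i d, ((d - 1 - i : ℕ) : ℚ) - ((d - 1 - j : ℕ) : ℚ)
      = (j : ℚ) - (i : ℚ) := by
    intro j hj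
    rw [Finset.mem_Ioo] at hj
    rw [Nat.cast_sub (by omega : i ≤ d - 1), Nat.cast_sub (by omega : j ≤ d - 1)]
    push_cast [Nat.cast_sub (by omega : 1 ≤ d)]
    ring
  rw [Finset.prod_congr rfl h1, prod_Ioo_fact i d hi]

lemma card_eq_sum_rowLen (Y : YoungDiagram) (d : ℕ) (hd : Y.colLen 0 < d) :
    Y.card = ∑ i ∈ Finset.range d, Y.rowLen i := by
  have hmap : ∀ c ∈ Y.cells, c.1 ∈ Finset.range d := by
    intro c hc
    rw [Finset.mem_range]
    rw [YoungDiagram.mem_cells] at hc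
    have h1 : (c.1, 0) ∈ Y := Y.up_left_mem (le_refl _) (Nat.zero_le _) (by simpa using hc)
    have := mem_iff_lt_colLen.1 h1
    omega
  rw [YoungDiagram.card, Finset.card_eq_sum_card_fiberwise hmap]
  refine Finset.sum_congr rfl (fun i hi => ?_)
  rw [Y.rowLen_eq_card]
  congr 1


lemma gauss_sum (d : ℕ) :
    ∑ i ∈ Finset.range d, ((d - 1 - i : ℕ) : ℚ) = (d * (d - 1) : ℚ) / 2 := by
  rcases Nat.eq_zero_or_pos d with h | h
  · subst h; simp
  have h1 : ∑ i ∈ Finset.range d, ((d - 1 - i : ℕ) : ℚ) = ∑ i ∈ Finset.range d, (i : ℚ) := by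
    have := Finset.sum_range_reflect (fun j => ((j : ℕ) : ℚ)) d
    calc ∑ i ∈ Finset.range d, ((d - 1 - i : ℕ) : ℚ)
        = ∑ i ∈ Finset.range d, ((fun j => ((j : ℕ) : ℚ)) (d - 1 - i)) := rfl
      _ = ∑ i ∈ Finset.range d, (i : ℚ) := this
  rw [h1]
  have h2 : ((∑ i ∈ Finset.range d, i : ℕ) : ℚ) = ∑ i ∈ Finset.range d, (i : ℚ) := by
    push_cast
    rfl
  rw [← h2]
  have h3 := Finset.sum_range_id_mul_two d
  have h4 : ((∑ i ∈ Finset.range d, i) * 2 : ℕ) = ((d * (d - 1) : ℕ) : ℚ) := by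
    exact_mod_cast congrArg (Nat.cast : ℕ → ℚ) h3
  push_cast [Nat.cast_sub (by omega : 1 ≤ d)] at h4
  linarith

end Base

section Frob
open Finset

/-- shifted row lengths -/
def ell (Y : YoungDiagram) (d : ℕ) (i : ℕ) : ℕ := Y.rowLen i + (d - 1 - i)

lemma ell_anti (Y : YoungDiagram) (d : ℕ) :
    ∀ i j, i < j → j < d → (fun i => ((ell Y d i : ℕ) : ℚ)) j < (fun i => ((ell Y d i : ℕ) : ℚ)) i := by
  intro i j hij hj
  simp only
  have h1 : Y.rowLen j ≤ Y.rowLen i := Y.rowLen_anti i j (le_of_lt hij)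
  have h2 : ell Y d j < ell Y d i := by
    unfold ell
    omega
  exact_mod_cast h2

theorem frobenius (d : ℕ) (hd : 2 ≤ d) :
    ∀ n : ℕ, ∀ Y : YoungDiagram, Y.card = n → Y.colLen 0 < d →
    (numSYT Y : ℚ) * ∏ i ∈ Finset.range d, (Nat.factorial (ell Y d i) : ℚ)
      = (Nat.factorial n : ℚ) * vdm d (fun i => ((ell Y d i : ℕ) : ℚ)) := by
  intro n
  induction n using Nat.strong_induction_on with
  | _ n IH =>
    intro Y hcard hcol
    rcases Nat.eq_zero_or_pos n with hn | hn
    · -- base case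
      subst hn
      rw [numSYT_card_zero Y hcard]
      have hell : ∀ i, ell Y d i = d - 1 - i := by
        intro i
        unfold ell
        rw [rowLen_card_zero Y hcard]
        omega
      have h1 : vdm d (fun i => ((ell Y d i : ℕ) : ℚ))
          = vdm d (fun i => ((d - 1 - i : ℕ) : ℚ)) := by
        apply vdm_congr
        intro i _
        rw [hell i]
      rw [h1, superfactorial d]
      simp only [Nat.factorial_zero, Nat.cast_one, one_mul]
      refine Finset.prod_congr rfl (fun i _ => ?_)
      rw [hell i]
    · -- inductive step
      have h0 : Y.card ≠ 0 := by omega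
      rw [branching Y h0 d hcol]
      set filt := (Finset.range d).filter (fun r => Y.rowLen (r+1) < Y.rowLen r) with hfilt
      push_cast
      rw [Finset.sum_mul]
      -- per-corner rewrite
      have hterm : ∀ r ∈ filt,
          (numSYT (eraseRow Y r) : ℚ) * ∏ i ∈ Finset.range d, (Nat.factorial (ell Y d i) : ℚ)
          = (Nat.factorial (n-1) : ℚ) * ((ell Y d r : ℚ) *
              vdm d (Function.update (fun i => ((ell Y d i : ℕ) : ℚ)) r ((ell Y d r : ℚ) - 1))) := by
        intro r hrf
        rw [hfilt, Finset.mem_filter, Finset.mem_range] at hrf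
        obtain ⟨hrd, hrc⟩ := hrf
        have hY' := IH (n-1) (by omega) (eraseRow Y r) (by rw [card_eraseRow hrc]; omega)
          (lt_of_le_of_lt (colLen_eraseRow_le hrc) hcol)
        have hrpos : 0 < Y.rowLen r := by omega
        -- ell of erased
        have hellr : ell (eraseRow Y r) d r = ell Y d r - 1 := by
          unfold ell
          rw [rowLen_eraseRow_self hrc]
          omega
        have hellne : ∀ i, i ≠ r → ell (eraseRow Y r) d i = ell Y d i := by
          intro i hi
          unfold ell
          rw [rowLen_eraseRow_ne hrc hi]
        have hellpos : 0 < ell Y d r := by unfold ell; omega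
        -- factorial product relation
        have hfac : ∏ i ∈ Finset.range d, (Nat.factorial (ell Y d i) : ℚ)
            = (ell Y d r : ℚ) * ∏ i ∈ Finset.range d, (Nat.factorial (ell (eraseRow Y r) d i) : ℚ) := by
          rw [← Finset.mul_prod_erase (Finset.range d)
              (fun i => (Nat.factorial (ell Y d i) : ℚ)) (Finset.mem_range.2 hrd),
            ← Finset.mul_prod_erase (Finset.range d)
              (fun i => (Nat.factorial (ell (eraseRow Y r) d i) : ℚ)) (Finset.mem_range.2 hrd)]
          have h2 : (Nat.factorial (ell Y d r) : ℚ)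
              = (ell Y d r : ℚ) * (Nat.factorial (ell (eraseRow Y r) d r) : ℚ) := by
            rw [hellr]
            rw [← Nat.cast_mul]
            congr 1
            exact (Nat.mul_factorial_pred hellpos.ne').symm
          have h3 : ∏ i ∈ (Finset.range d).erase r, (Nat.factorial (ell Y d i) : ℚ)
              = ∏ i ∈ (Finset.range d).erase r, (Nat.factorial (ell (eraseRow Y r) d i) : ℚ) := by
            refine Finset.prod_congr rfl (fun i hi => ?_)
            rw [hellne i (Finset.ne_of_mem_erase hi)]
          rw [h2, h3]
          ring
        -- vdm relation
        have hvdm : vdm d (fun i => ((ell (eraseRow Y r) d i : ℕ) : ℚ))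
            = vdm d (Function.update (fun i => ((ell Y d i : ℕ) : ℚ)) r ((ell Y d r : ℚ) - 1)) := by
          apply vdm_congr
          intro i _
          by_cases hir : i = r
          · subst hir
            rw [Function.update_self, hellr]
            rw [Nat.cast_sub (by omega : 1 ≤ ell Y d i)]
            norm_num
          · rw [Function.update_of_ne hir, hellne i hir]
        rw [hfac]
        calc (numSYT (eraseRow Y r) : ℚ) * ((ell Y d r : ℚ)
              * ∏ i ∈ Finset.range d, (Nat.factorial (ell (eraseRow Y r) d i) : ℚ))
            = (ell Y d r : ℚ) * ((numSYT (eraseRow Y r) : ℚ)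
              * ∏ i ∈ Finset.range d, (Nat.factorial (ell (eraseRow Y r) d i) : ℚ)) := by ring
          _ = (ell Y d r : ℚ) * ((Nat.factorial (n-1) : ℚ)
              * vdm d (fun i => ((ell (eraseRow Y r) d i : ℕ) : ℚ))) := by rw [hY']
          _ = _ := by rw [hvdm]; ring
      rw [Finset.sum_congr rfl hterm]
      -- extend the sum to all of range d
      have hext : ∑ r ∈ filt, (Nat.factorial (n-1) : ℚ) * ((ell Y d r : ℚ) *
              vdm d (Function.update (fun i => ((ell Y d i : ℕ) : ℚ)) r ((ell Y d r : ℚ) - 1)))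
          = ∑ r ∈ Finset.range d, (Nat.factorial (n-1) : ℚ) * ((ell Y d r : ℚ) *
              vdm d (Function.update (fun i => ((ell Y d i : ℕ) : ℚ)) r ((ell Y d r : ℚ) - 1))) := by
        apply Finset.sum_subset (Finset.filter_subset _ _)
        intro r hrd hrf
        have hrd' := Finset.mem_range.1 hrd
        have hnc : ¬ (Y.rowLen (r+1) < Y.rowLen r) := by
          intro hc
          exact hrf (Finset.mem_filter.2 ⟨hrd, hc⟩)
        push_neg at hnc
        have hmono := Y.rowLen_anti r (r+1) (by omega)
        have heq : Y.rowLen (r+1) = Y.rowLen r := le_antisymm hmono hnc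
        rcases Nat.lt_or_ge r (d-1) with hrd1 | hrd1
        · -- zero because two equal entries
          have hzero : vdm d (Function.update (fun i => ((ell Y d i : ℕ) : ℚ)) r
              ((ell Y d r : ℚ) - 1)) = 0 := by
            apply vdm_eq_zero (show r < r + 1 by omega) (show r + 1 < d by omega)
            rw [Function.update_self, Function.update_of_ne (by omega : r + 1 ≠ r)]
            unfold ell
            rw [heq]
            have hstep : d - 1 - r = (d - 1 - (r + 1)) + 1 := by omega
            push_cast [hstep]
            ring
          rw [hzero]
          ring
        · -- r = d - 1 : the factor ell is zero
          have hrd2 : r = d - 1 := by omega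
          have hr0 : Y.rowLen r = 0 := by
            have := rowLen_pos_iff (Y := Y) (r := r)
            by_contra hpos
            have h2 : r < Y.colLen 0 := this.1 (by omega)
            omega
          have : ell Y d r = 0 := by
            unfold ell
            rw [hr0]
            omega
          rw [this]
          push_cast
          ring
      rw [hext, ← Finset.mul_sum, sum_step d hd _ (ell_anti Y d)]
      -- identify the scalar
      have hsum : (∑ i ∈ Finset.range d, ((ell Y d i : ℕ) : ℚ)) - (d * (d - 1) : ℚ) / 2
          = (n : ℚ) := by
        have h1 : ∑ i ∈ Finset.range d, ((ell Y d i : ℕ) : ℚ)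
            = (∑ i ∈ Finset.range d, (Y.rowLen i : ℚ))
              + ∑ i ∈ Finset.range d, ((d - 1 - i : ℕ) : ℚ) := by
          rw [← Finset.sum_add_distrib]
          refine Finset.sum_congr rfl (fun i _ => ?_)
          unfold ell
          push_cast
          ring
        have h2 : ∑ i ∈ Finset.range d, (Y.rowLen i : ℚ) = (n : ℚ) := by
          rw [← hcard, card_eq_sum_rowLen Y d hcol]
          push_cast
          rfl
        rw [h1, h2, gauss_sum d]
        ring
      rw [hsum]
      have hfacn : (Nat.factorial (n-1) : ℚ) * (n : ℚ) = (Nat.factorial n : ℚ) := by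
        rw [← Nat.cast_mul]
        congr 1
        rw [mul_comm]
        exact Nat.mul_factorial_pred hn.ne'
      calc (Nat.factorial (n-1) : ℚ) * ((n : ℚ) * vdm d (fun i => ((ell Y d i : ℕ) : ℚ)))
          = ((Nat.factorial (n-1) : ℚ) * (n : ℚ)) * vdm d (fun i => ((ell Y d i : ℕ) : ℚ)) := by ring
        _ = _ := by rw [hfacn]

end Frob

section TwoCorner
open Finset

lemma vdm_two {d r1 r2 : ℕ} (hr1 : r1 < d) (hr2 : r2 < d) (hne : r1 ≠ r2)
    (x x1 x2 x12 : ℕ → ℚ)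
    (h1 : ∀ i, i ≠ r1 → x1 i = x i) (h1r : x1 r1 = x r1 - 1)
    (h2 : ∀ i, i ≠ r2 → x2 i = x i) (h2r : x2 r2 = x r2 - 1)
    (h12 : ∀ i, i ≠ r1 → x12 i = x2 i) (h12r : x12 r1 = x2 r1 - 1) :
    vdm d x1 * vdm d x2 * (x r1 - x r2)^2
      = vdm d x * vdm d x12 * ((x r1 - x r2)^2 - 1) := by
  have hr2e : r2 ∈ (Finset.range d).erase r1 :=
    Finset.mem_erase.2 ⟨fun h => hne (h.symm), Finset.mem_range.2 hr2⟩
  -- double products agree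
  have hC1 : (∏ i ∈ (Finset.range d).erase r1, ∏ j ∈ (Finset.Ioo i d).erase r1, (x1 i - x1 j))
      = ∏ i ∈ (Finset.range d).erase r1, ∏ j ∈ (Finset.Ioo i d).erase r1, (x i - x j) :=
    Finset.prod_congr rfl (fun i hi => Finset.prod_congr rfl (fun j hj => by
      rw [h1 i (Finset.ne_of_mem_erase hi), h1 j (Finset.ne_of_mem_erase hj)]))
  have hC12 : (∏ i ∈ (Finset.range d).erase r1, ∏ j ∈ (Finset.Ioo i d).erase r1, (x12 i - x12 j))
      = ∏ i ∈ (Finset.range d).erase r1, ∏ j ∈ (Finset.Ioo i d).erase r1, (x2 i - x2 j) :=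
    Finset.prod_congr rfl (fun i hi => Finset.prod_congr rfl (fun j hj => by
      rw [h12 i (Finset.ne_of_mem_erase hi), h12 j (Finset.ne_of_mem_erase hj)]))
  -- split all four
  rw [vdm_split hr1 x, vdm_split hr1 x1, vdm_split hr1 x2, vdm_split hr1 x12, hC1, hC12]
  -- peel off the r2 factor from the four linear products
  rw [← Finset.mul_prod_erase _ (fun k => x r1 - x k) hr2e,
    ← Finset.mul_prod_erase _ (fun k => x1 r1 - x1 k) hr2e,
    ← Finset.mul_prod_erase _ (fun k => x2 r1 - x2 k) hr2e,
    ← Finset.mul_prod_erase _ (fun k => x12 r1 - x12 k) hr2e]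
  -- rewrite the remaining products
  have e1 : ∏ k ∈ ((Finset.range d).erase r1).erase r2, (x1 r1 - x1 k)
      = ∏ k ∈ ((Finset.range d).erase r1).erase r2, (x r1 - 1 - x k) :=
    Finset.prod_congr rfl (fun k hk => by
      rw [h1 k (Finset.ne_of_mem_erase (Finset.mem_of_mem_erase hk)), h1r])
  have e2 : ∏ k ∈ ((Finset.range d).erase r1).erase r2, (x2 r1 - x2 k)
      = ∏ k ∈ ((Finset.range d).erase r1).erase r2, (x r1 - x k) :=
    Finset.prod_congr rfl (fun k hk => by
      rw [h2 k (Finset.ne_of_mem_erase hk),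
        h2 r1 (fun h => hne h)])
  have e12 : ∏ k ∈ ((Finset.range d).erase r1).erase r2, (x12 r1 - x12 k)
      = ∏ k ∈ ((Finset.range d).erase r1).erase r2, (x r1 - 1 - x k) :=
    Finset.prod_congr rfl (fun k hk => by
      rw [h12 k (Finset.ne_of_mem_erase (Finset.mem_of_mem_erase hk)),
        h2 k (Finset.ne_of_mem_erase hk), h12r, h2 r1 (fun h => hne h)])
  rw [e1, e2, e12]
  -- rewrite peeled factors
  have p1 : x1 r1 - x1 r2 = (x r1 - x r2) - 1 := by
    rw [h1 r2 (fun h => hne h.symm), h1r]; ring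
  have p2 : x2 r1 - x2 r2 = (x r1 - x r2) + 1 := by
    rw [h2 r1 (fun h => hne h), h2r]; ring
  have p12 : x12 r1 - x12 r2 = x r1 - x r2 := by
    rw [h12 r2 (fun h => hne h.symm), h12r, h2 r1 (fun h => hne h), h2r]; ring
  rw [p1, p2, p12]
  ring

end TwoCorner

section Final
open Finset

lemma corner_of_diff {Y Z : YoungDiagram} {a b : ℕ}
    (hZ : (↑Z.cells : Set (ℕ × ℕ)) = ↑Y.cells \ {(a, b)}) :
    (a, b+1) ∉ Y ∧ (a+1, b) ∉ Y := by
  constructor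
  · intro hmem
    have h1 : ((a, b+1) : ℕ × ℕ) ∈ (↑Z.cells : Set (ℕ × ℕ)) := by
      rw [hZ]
      refine ⟨by simpa using hmem, ?_⟩
      simp only [Set.mem_singleton_iff, Prod.mk.injEq]
      omega
    have h2 : ((a, b) : ℕ × ℕ) ∈ (↑Z.cells : Set (ℕ × ℕ)) := by
      have := Z.isLowerSet (show ((a,b) : ℕ×ℕ) ≤ (a, b+1) by constructor <;> simp) ?_
      · simpa using this
      · simpa using h1
    rw [hZ] at h2
    exact h2.2 rfl
  · intro hmem
    have h1 : ((a+1, b) : ℕ × ℕ) ∈ (↑Z.cells : Set (ℕ × ℕ)) := by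
      rw [hZ]
      refine ⟨by simpa using hmem, ?_⟩
      simp only [Set.mem_singleton_iff, Prod.mk.injEq]
      omega
    have h2 : ((a, b) : ℕ × ℕ) ∈ (↑Z.cells : Set (ℕ × ℕ)) := by
      have := Z.isLowerSet (show ((a,b) : ℕ×ℕ) ≤ (a+1, b) by constructor <;> simp) ?_
      · simpa using this
      · simpa using h1
    rw [hZ] at h2
    exact h2.2 rfl

lemma corner_data {Y Z : YoungDiagram} {a b : ℕ}
    (hmem : (a, b) ∈ Y)
    (hZ : (↑Z.cells : Set (ℕ × ℕ)) = ↑Y.cells \ {(a, b)}) :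
    Y.rowLen a = b + 1 ∧ Y.rowLen (a+1) < Y.rowLen a ∧ Z = eraseRow Y a := by
  obtain ⟨hR, hD⟩ := corner_of_diff hZ
  have h1 : b < Y.rowLen a := mem_iff_lt_rowLen.1 hmem
  have h2 : ¬ (b + 1 < Y.rowLen a) := fun h => hR (mem_iff_lt_rowLen.2 h)
  have hrow : Y.rowLen a = b + 1 := by omega
  have h3 : ¬ (b < Y.rowLen (a+1)) := fun h => hD (mem_iff_lt_rowLen.2 h)
  have hcor : Y.rowLen (a+1) < Y.rowLen a := by omega
  refine ⟨hrow, hcor, ?_⟩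
  apply YoungDiagram.ext
  apply Finset.coe_injective
  rw [cells_eraseRow hcor, Finset.coe_erase, hZ, hrow]
  norm_num

lemma colLen_pos_of_mem {Y : YoungDiagram} {a b : ℕ} (h : (a, b) ∈ Y) : a < Y.colLen 0 :=
  mem_iff_lt_colLen.1 (Y.up_left_mem (le_refl _) (Nat.zero_le _) h)

end Final

end YD13

open YoungDiagram YD13 in
set_option maxHeartbeats 2000000 in
/-- Let `λ ⊢ n` and `κ ⊂ λ` with `|κ| = n − 2`, such that `λ/κ` consists of two boxes at
positions `(i₁,j₁)` and `(i₂,j₂)` at distance `L = |i₁−i₂| + |j₁−j₂| > 1` (so both are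
corners of `λ`).  Let `α¹`, `α²` be obtained from `λ` by deleting the corners `(i₁,j₁)`,
`(i₂,j₂)` respectively.  Then
`n (n−1)⁻¹ · (#SYT(α¹) #SYT(α²)) / (#SYT(λ) #SYT(κ)) = 1 − L⁻¹²`. -/
theorem stmt13 (n : ℕ) (Yl Yk Ya1 Ya2 : YoungDiagram) (i₁ j₁ i₂ j₂ L : ℕ)
    (h2n : 2 ≤ n) (hln : Yl.card = n) (hkn : Yk.card = n - 2)
    (hsub : Yk.cells ⊆ Yl.cells)
    (hdiff : (↑Yl.cells \ ↑Yk.cells : Set (ℕ × ℕ)) = {(i₁, j₁), (i₂, j₂)})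
    (hne : (i₁, j₁) ≠ (i₂, j₂))
    (hL : (L : ℤ) = |(i₁ : ℤ) - (i₂ : ℤ)| + |(j₁ : ℤ) - (j₂ : ℤ)|)
    (hL1 : 1 < L)
    (ha1 : (↑Ya1.cells : Set (ℕ × ℕ)) = ↑Yl.cells \ {(i₁, j₁)})
    (ha2 : (↑Ya2.cells : Set (ℕ × ℕ)) = ↑Yl.cells \ {(i₂, j₂)}) :
    (n : ℚ) * ((n : ℚ) - 1)⁻¹ *
        ((numSYT Ya1 : ℚ) * (numSYT Ya2 : ℚ)) / ((numSYT Yl : ℚ) * (numSYT Yk : ℚ))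
      = 1 - ((L : ℚ))⁻¹ ^ 2 := by
  classical
  -- membership of the two corners
  have hc1l : (i₁, j₁) ∈ Yl := by
    have h : ((i₁, j₁) : ℕ × ℕ) ∈ (↑Yl.cells \ ↑Yk.cells : Set (ℕ × ℕ)) := by
      rw [hdiff]; exact Set.mem_insert _ _
    exact (YoungDiagram.mem_cells _).1 h.1
  have hc2l : (i₂, j₂) ∈ Yl := by
    have h : ((i₂, j₂) : ℕ × ℕ) ∈ (↑Yl.cells \ ↑Yk.cells : Set (ℕ × ℕ)) := by
      rw [hdiff]; exact Set.mem_insert_iff.2 (Or.inr rfl)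
    exact (YoungDiagram.mem_cells _).1 h.1
  obtain ⟨hrow1, hcor1, hYa1e⟩ := corner_data hc1l ha1
  obtain ⟨hrow2, hcor2, hYa2e⟩ := corner_data hc2l ha2
  -- the two corners are in different rows
  have hii : i₁ ≠ i₂ := by
    intro h
    have hjj : j₁ ≠ j₂ := fun h2 => hne (by rw [h, h2])
    obtain ⟨hR1, -⟩ := corner_of_diff ha1
    obtain ⟨hR2, -⟩ := corner_of_diff ha2
    rcases Nat.lt_or_ge j₁ j₂ with hj | hj
    · exact hR1 (Yl.up_left_mem (le_of_eq h) (by omega) hc2l)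
    · exact hR2 (Yl.up_left_mem (le_of_eq h.symm) (by omega) hc1l)
  have hord1 : i₁ < i₂ → j₂ < j₁ := by
    intro h
    have h1 := Yl.rowLen_anti (i₁+1) i₂ (by omega)
    omega
  have hord2 : i₂ < i₁ → j₁ < j₂ := by
    intro h
    have h1 := Yl.rowLen_anti (i₂+1) i₁ (by omega)
    omega
  -- Yk as a double erase
  have hsub' : (↑Yk.cells : Set (ℕ × ℕ)) ⊆ ↑Yl.cells := Finset.coe_subset.2 hsub
  have hYkcells : (↑Yk.cells : Set (ℕ × ℕ)) = ↑Yl.cells \ {(i₁, j₁), (i₂, j₂)} := by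
    rw [← hdiff]
    exact (Set.diff_diff_cancel_left hsub').symm
  have hj1 : Yl.rowLen i₁ - 1 = j₁ := by omega
  have hc2e : (i₂, j₂) ∈ eraseRow Yl i₁ := by
    rw [mem_eraseRow hcor1, hj1]
    exact ⟨hc2l, hne.symm⟩
  have hZk : (↑Yk.cells : Set (ℕ × ℕ)) = ↑(eraseRow Yl i₁).cells \ {(i₂, j₂)} := by
    rw [cells_eraseRow hcor1, Finset.coe_erase, hj1, hYkcells, Set.diff_diff]
    congr 1
  obtain ⟨hrow2', hcor2', hYke⟩ := corner_data hc2e hZk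
  -- the ambient number of rows
  set d := Yl.colLen 0 + 1 with hd
  have hi1c : i₁ < Yl.colLen 0 := colLen_pos_of_mem hc1l
  have hi2c : i₂ < Yl.colLen 0 := colLen_pos_of_mem hc2l
  have hd2 : 2 ≤ d := by omega
  have hcoll : Yl.colLen 0 < d := by omega
  have hcol1 : Ya1.colLen 0 < d := by
    have h1 : Ya1.colLen 0 ≤ Yl.colLen 0 := by
      rw [hYa1e]; exact colLen_eraseRow_le hcor1
    omega
  have hcol2 : Ya2.colLen 0 < d := by
    have h1 : Ya2.colLen 0 ≤ Yl.colLen 0 := by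
      rw [hYa2e]; exact colLen_eraseRow_le hcor2
    omega
  have hcolk : Yk.colLen 0 < d := by
    have h1 : Yk.colLen 0 ≤ (eraseRow Yl i₁).colLen 0 := by
      rw [hYke]; exact colLen_eraseRow_le hcor2'
    have h2 : (eraseRow Yl i₁).colLen 0 ≤ Yl.colLen 0 := colLen_eraseRow_le hcor1
    omega
  -- cards
  have hn1 : Ya1.card = n - 1 := by rw [hYa1e, card_eraseRow hcor1, hln]
  have hn2 : Ya2.card = n - 1 := by rw [hYa2e, card_eraseRow hcor2, hln]
  -- Frobenius formulas
  have Feql := frobenius d hd2 n Yl hln hcoll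
  have Feq1 := frobenius d hd2 (n-1) Ya1 hn1 hcol1
  have Feq2 := frobenius d hd2 (n-1) Ya2 hn2 hcol2
  have Feqk := frobenius d hd2 (n-2) Yk hkn hcolk
  -- ell comparisons (ℕ level)
  have hrowk1 : Yk.rowLen i₁ = Yl.rowLen i₁ - 1 := by
    rw [hYke, rowLen_eraseRow_ne hcor2' (by omega : i₁ ≠ i₂), rowLen_eraseRow_self hcor1]
  have hrowk2 : Yk.rowLen i₂ = Yl.rowLen i₂ - 1 := by
    rw [hYke, rowLen_eraseRow_self hcor2', rowLen_eraseRow_ne hcor1 (by omega : i₂ ≠ i₁)]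
  have hrowko : ∀ i, i ≠ i₁ → i ≠ i₂ → Yk.rowLen i = Yl.rowLen i := by
    intro i h1 h2
    rw [hYke, rowLen_eraseRow_ne hcor2' h2, rowLen_eraseRow_ne hcor1 h1]
  have he1o : ∀ i, i ≠ i₁ → ell Ya1 d i = ell Yl d i := by
    intro i hi
    unfold ell
    rw [hYa1e, rowLen_eraseRow_ne hcor1 hi]
  have he1r : ell Ya1 d i₁ = ell Yl d i₁ - 1 := by
    unfold ell
    rw [hYa1e, rowLen_eraseRow_self hcor1]
    omega
  have he2o : ∀ i, i ≠ i₂ → ell Ya2 d i = ell Yl d i := by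
    intro i hi
    unfold ell
    rw [hYa2e, rowLen_eraseRow_ne hcor2 hi]
  have he2r : ell Ya2 d i₂ = ell Yl d i₂ - 1 := by
    unfold ell
    rw [hYa2e, rowLen_eraseRow_self hcor2]
    omega
  have heko : ∀ i, i ≠ i₁ → ell Yk d i = ell Ya2 d i := by
    intro i hi
    by_cases h2 : i = i₂
    · subst h2
      unfold ell
      rw [hrowk2, hYa2e, rowLen_eraseRow_self hcor2]
    · unfold ell
      rw [hrowko i hi h2, hYa2e, rowLen_eraseRow_ne hcor2 h2]
  have hekr : ell Yk d i₁ = ell Ya2 d i₁ - 1 := by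
    unfold ell
    rw [hrowk1, hYa2e, rowLen_eraseRow_ne hcor2 (by omega : i₁ ≠ i₂)]
    omega
  have hA1 : 1 ≤ ell Yl d i₁ := by unfold ell; omega
  have hA2 : 1 ≤ ell Yl d i₂ := by unfold ell; omega
  have hA2' : 1 ≤ ell Ya2 d i₁ := by
    rw [he2o i₁ (by omega : i₁ ≠ i₂)]; exact hA1
  -- cast versions for vdm_two
  have h1c : ∀ i, i ≠ i₁ → ((ell Ya1 d i : ℕ) : ℚ) = ((ell Yl d i : ℕ) : ℚ) := by
    intro i hi; rw [he1o i hi]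
  have h1rc : ((ell Ya1 d i₁ : ℕ) : ℚ) = ((ell Yl d i₁ : ℕ) : ℚ) - 1 := by
    rw [he1r, Nat.cast_sub hA1]; norm_num
  have h2c : ∀ i, i ≠ i₂ → ((ell Ya2 d i : ℕ) : ℚ) = ((ell Yl d i : ℕ) : ℚ) := by
    intro i hi; rw [he2o i hi]
  have h2rc : ((ell Ya2 d i₂ : ℕ) : ℚ) = ((ell Yl d i₂ : ℕ) : ℚ) - 1 := by
    rw [he2r, Nat.cast_sub hA2]; norm_num
  have h12c : ∀ i, i ≠ i₁ → ((ell Yk d i : ℕ) : ℚ) = ((ell Ya2 d i : ℕ) : ℚ) := by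
    intro i hi; rw [heko i hi]
  have h12rc : ((ell Yk d i₁ : ℕ) : ℚ) = ((ell Ya2 d i₁ : ℕ) : ℚ) - 1 := by
    rw [hekr, Nat.cast_sub hA2']; norm_num
  have hvt := vdm_two (show i₁ < d by omega) (show i₂ < d by omega) hii
    (fun i => ((ell Yl d i : ℕ) : ℚ)) (fun i => ((ell Ya1 d i : ℕ) : ℚ))
    (fun i => ((ell Ya2 d i : ℕ) : ℚ)) (fun i => ((ell Yk d i : ℕ) : ℚ))
    h1c h1rc h2c h2rc h12c h12rc
  -- (A - B)^2 = L^2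
  have hABL : (((ell Yl d i₁ : ℕ) : ℚ) - ((ell Yl d i₂ : ℕ) : ℚ))^2 = (L : ℚ)^2 := by
    have ha : ell Yl d i₁ = j₁ + 1 + (d - 1 - i₁) := by unfold ell; omega
    have hb : ell Yl d i₂ = j₂ + 1 + (d - 1 - i₂) := by unfold ell; omega
    have hz : (ell Yl d i₁ : ℤ) - (ell Yl d i₂ : ℤ) = (L : ℤ)
        ∨ (ell Yl d i₁ : ℤ) - (ell Yl d i₂ : ℤ) = -(L : ℤ) := by
      rcases abs_cases ((i₁ : ℤ) - (i₂ : ℤ)) with ⟨hx1, hx2⟩ | ⟨hx1, hx2⟩ <;>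
        rcases abs_cases ((j₁ : ℤ) - (j₂ : ℤ)) with ⟨hy1, hy2⟩ | ⟨hy1, hy2⟩ <;>
          rw [hx1, hy1] at hL <;> omega
    rcases hz with h | h
    · have hq : ((ell Yl d i₁ : ℕ) : ℚ) - ((ell Yl d i₂ : ℕ) : ℚ) = (L : ℚ) := by
        exact_mod_cast congrArg (fun z : ℤ => (z : ℚ)) h
      rw [hq]
    · have hq : ((ell Yl d i₁ : ℕ) : ℚ) - ((ell Yl d i₂ : ℕ) : ℚ) = -(L : ℚ) := by
        exact_mod_cast congrArg (fun z : ℤ => (z : ℚ)) h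
      rw [hq]
      ring
  -- factorial products match up
  have hFprod : (∏ i ∈ Finset.range d, (Nat.factorial (ell Ya1 d i) : ℚ))
        * (∏ i ∈ Finset.range d, (Nat.factorial (ell Ya2 d i) : ℚ))
      = (∏ i ∈ Finset.range d, (Nat.factorial (ell Yl d i) : ℚ))
        * (∏ i ∈ Finset.range d, (Nat.factorial (ell Yk d i) : ℚ)) := by
    rw [← Finset.prod_mul_distrib, ← Finset.prod_mul_distrib]
    refine Finset.prod_congr rfl (fun i _ => ?_)
    by_cases hA : i = i₁
    · subst hA
      rw [he1r, he2o i (by omega : i ≠ i₂), hekr, he2o i (by omega : i ≠ i₂)]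
      ring
    · by_cases hB : i = i₂
      · subst hB
        rw [he1o i (by omega : i ≠ i₁), he2r, heko i (by omega : i ≠ i₁), he2r]
      · rw [he1o i hA, he2o i hB, heko i hA, he2o i hB]
  -- nonvanishing
  have hVl : 0 < vdm d (fun i => ((ell Yl d i : ℕ) : ℚ)) := vdm_pos (ell_anti Yl d)
  have hVk : 0 < vdm d (fun i => ((ell Yk d i : ℕ) : ℚ)) := vdm_pos (ell_anti Yk d)
  have hFl : 0 < ∏ i ∈ Finset.range d, (Nat.factorial (ell Yl d i) : ℚ) :=
    Finset.prod_pos (fun i _ => by positivity)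
  have hFk : 0 < ∏ i ∈ Finset.range d, (Nat.factorial (ell Yk d i) : ℚ) :=
    Finset.prod_pos (fun i _ => by positivity)
  have hF1 : 0 < ∏ i ∈ Finset.range d, (Nat.factorial (ell Ya1 d i) : ℚ) :=
    Finset.prod_pos (fun i _ => by positivity)
  have hF2 : 0 < ∏ i ∈ Finset.range d, (Nat.factorial (ell Ya2 d i) : ℚ) :=
    Finset.prod_pos (fun i _ => by positivity)
  have hNl : (numSYT Yl : ℚ) ≠ 0 := by
    intro h
    rw [h, zero_mul] at Feql
    have : (0:ℚ) < (Nat.factorial n : ℚ) * vdm d (fun i => ((ell Yl d i : ℕ) : ℚ)) := by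
      positivity
    rw [← Feql] at this
    exact lt_irrefl 0 this
  have hNk : (numSYT Yk : ℚ) ≠ 0 := by
    intro h
    rw [h, zero_mul] at Feqk
    have : (0:ℚ) < (Nat.factorial (n-2) : ℚ) * vdm d (fun i => ((ell Yk d i : ℕ) : ℚ)) := by
      positivity
    rw [← Feqk] at this
    exact lt_irrefl 0 this
  -- factorial cast identities
  have hfq1 : (n : ℚ) * (Nat.factorial (n-1) : ℚ) = (Nat.factorial n : ℚ) := by
    rw [← Nat.cast_mul]
    congr 1
    exact Nat.mul_factorial_pred (by omega)
  have hfq2 : ((n : ℚ) - 1) * (Nat.factorial (n-2) : ℚ) = (Nat.factorial (n-1) : ℚ) := by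
    have hcast : ((n : ℚ) - 1) = ((n - 1 : ℕ) : ℚ) := by
      rw [Nat.cast_sub (by omega : 1 ≤ n)]; norm_num
    rw [hcast, ← Nat.cast_mul]
    congr 1
    have : n - 1 - 1 = n - 2 := by omega
    rw [← this]
    exact Nat.mul_factorial_pred (by omega)
  -- main cross-multiplied identity
  have hmain : (n : ℚ) * ((numSYT Ya1 : ℚ) * (numSYT Ya2 : ℚ)) * (L : ℚ)^2
      = ((n : ℚ) - 1) * ((L : ℚ)^2 - 1) * ((numSYT Yl : ℚ) * (numSYT Yk : ℚ)) := by
    have hFne : (∏ i ∈ Finset.range d, (Nat.factorial (ell Ya1 d i) : ℚ))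
        * (∏ i ∈ Finset.range d, (Nat.factorial (ell Ya2 d i) : ℚ)) ≠ 0 := by positivity
    apply mul_right_cancel₀ hFne
    calc (n : ℚ) * ((numSYT Ya1 : ℚ) * (numSYT Ya2 : ℚ)) * (L : ℚ)^2
        * ((∏ i ∈ Finset.range d, (Nat.factorial (ell Ya1 d i) : ℚ))
          * (∏ i ∈ Finset.range d, (Nat.factorial (ell Ya2 d i) : ℚ)))
        = (n : ℚ) * (L : ℚ)^2
          * (((numSYT Ya1 : ℚ) * ∏ i ∈ Finset.range d, (Nat.factorial (ell Ya1 d i) : ℚ))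
            * ((numSYT Ya2 : ℚ) * ∏ i ∈ Finset.range d, (Nat.factorial (ell Ya2 d i) : ℚ))) := by
          ring
      _ = (n : ℚ) * (L : ℚ)^2 * (((Nat.factorial (n-1) : ℚ)
            * vdm d (fun i => ((ell Ya1 d i : ℕ) : ℚ)))
            * ((Nat.factorial (n-1) : ℚ) * vdm d (fun i => ((ell Ya2 d i : ℕ) : ℚ)))) := by
          rw [Feq1, Feq2]
      _ = (n : ℚ) * (Nat.factorial (n-1) : ℚ) * (Nat.factorial (n-1) : ℚ)
            * (vdm d (fun i => ((ell Ya1 d i : ℕ) : ℚ))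
              * vdm d (fun i => ((ell Ya2 d i : ℕ) : ℚ))
              * (((ell Yl d i₁ : ℕ) : ℚ) - ((ell Yl d i₂ : ℕ) : ℚ))^2) := by
          rw [hABL]; ring
      _ = (n : ℚ) * (Nat.factorial (n-1) : ℚ) * (Nat.factorial (n-1) : ℚ)
            * (vdm d (fun i => ((ell Yl d i : ℕ) : ℚ))
              * vdm d (fun i => ((ell Yk d i : ℕ) : ℚ))
              * ((((ell Yl d i₁ : ℕ) : ℚ) - ((ell Yl d i₂ : ℕ) : ℚ))^2 - 1)) := by
          rw [hvt]
      _ = ((n : ℚ) * (Nat.factorial (n-1) : ℚ)) * ((Nat.factorial (n-1) : ℚ))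
            * ((L : ℚ)^2 - 1)
            * (vdm d (fun i => ((ell Yl d i : ℕ) : ℚ))
              * vdm d (fun i => ((ell Yk d i : ℕ) : ℚ))) := by
          rw [hABL]; ring
      _ = ((n : ℚ) - 1) * ((L : ℚ)^2 - 1)
            * (((Nat.factorial n : ℚ) * vdm d (fun i => ((ell Yl d i : ℕ) : ℚ)))
              * ((Nat.factorial (n-2) : ℚ) * vdm d (fun i => ((ell Yk d i : ℕ) : ℚ)))) := by
          rw [hfq1, ← hfq2]; ring
      _ = ((n : ℚ) - 1) * ((L : ℚ)^2 - 1)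
            * (((numSYT Yl : ℚ) * ∏ i ∈ Finset.range d, (Nat.factorial (ell Yl d i) : ℚ))
              * ((numSYT Yk : ℚ) * ∏ i ∈ Finset.range d, (Nat.factorial (ell Yk d i) : ℚ))) := by
          rw [Feql, Feqk]
      _ = ((n : ℚ) - 1) * ((L : ℚ)^2 - 1) * ((numSYT Yl : ℚ) * (numSYT Yk : ℚ))
            * ((∏ i ∈ Finset.range d, (Nat.factorial (ell Yl d i) : ℚ))
              * (∏ i ∈ Finset.range d, (Nat.factorial (ell Yk d i) : ℚ))) := by
          ring
      _ = _ := by rw [← hFprod]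
  -- finish
  have hL0 : (L : ℚ) ≠ 0 := by
    have : (0:ℚ) < L := by exact_mod_cast (show 0 < L by omega)
    exact ne_of_gt this
  have hnq : (n : ℚ) - 1 ≠ 0 := by
    have h1 : (1:ℚ) < (n:ℚ) := by exact_mod_cast (show 1 < n by omega)
    intro h
    have : (n:ℚ) = 1 := by linarith
    linarith
  field_simp
  linear_combination hmain

end
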